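/- The function λ₊(x) = −(α + nx)/2 + (1/2)√((nx+α)² + 4αx) is strictly increasing on (0, ∞), and λ₊(x) → α/n as x → ∞. -/

import Mathlib

lemma key_ratl (α n : ℝ) (hα : 0 < α) (hn : 0 < n) {x : ℝ} (hx : 0 < x) :
    -(α + n * x) / 2 + (1 / 2) * Real.sqrt ((n * x + α) ^ 2 + 4 * α * x)
      = 2 * α * x / (Real.sqrt ((n * x + α) ^ 2 + 4 * α * x) + (n * x + α)) := by
  have hD : 0 ≤ (n*x+α)^2 + 4*α*x := by positivity
  have hs2 : (Real.sqrt ((n * x + α) ^ 2 + 4 * α * x))^2 = (n*x+α)^2+4*α*x :=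
    Real.sq_sqrt hD
  have hsnn : 0 ≤ Real.sqrt ((n * x + α) ^ 2 + 4 * α * x) := Real.sqrt_nonneg _
  have hspos : 0 < Real.sqrt ((n * x + α) ^ 2 + 4 * α * x) + (n * x + α) := by
    nlinarith
  rw [eq_div_iff hspos.ne']
  nlinarith [hs2]

/-- λ₊ is strictly increasing on (0,∞) and λ₊(x) → α/n as x → ∞. -/
theorem stmt_6 (α n : ℝ) (hα : 0 < α) (hn : 0 < n) :
    StrictMonoOn
        (fun x : ℝ => -(α + n * x) / 2 + (1 / 2) * Real.sqrt ((n * x + α) ^ 2 + 4 * α * x))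
        (Set.Ioi 0) ∧
    Filter.Tendsto
        (fun x : ℝ => -(α + n * x) / 2 + (1 / 2) * Real.sqrt ((n * x + α) ^ 2 + 4 * α * x))
        Filter.atTop (nhds (α / n)) := by
  constructor
  · intro x hx y hy hxy
    simp only [Set.mem_Ioi] at hx hy
    simp only
    rw [key_ratl α n hα hn hx, key_ratl α n hα hn hy]
    set Sx := Real.sqrt ((n * x + α) ^ 2 + 4 * α * x) with hSx
    set Sy := Real.sqrt ((n * y + α) ^ 2 + 4 * α * y) with hSy
    have hSx2 : Sx^2 = (n*x+α)^2+4*α*x := Real.sq_sqrt (by positivity)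
    have hSy2 : Sy^2 = (n*y+α)^2+4*α*y := Real.sq_sqrt (by positivity)
    have hSxnn : 0 ≤ Sx := Real.sqrt_nonneg _
    have hSynn : 0 ≤ Sy := Real.sqrt_nonneg _
    have hdx : 0 < Sx + (n*x+α) := by nlinarith
    have hdy : 0 < Sy + (n*y+α) := by nlinarith
    rw [div_lt_div_iff₀ hdx hdy]
    -- key: x * Sy < y * Sx
    have hkey : x * Sy < y * Sx := by
      have hsq : (x * Sy)^2 < (y * Sx)^2 := by
        have hyx : 0 < y - x := sub_pos.mpr hxy
        have hpos : 0 < 2*n*x*y + α*(x+y) + 4*x*y := by positivity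
        have : x^2 * ((n*y+α)^2+4*α*y) < y^2 * ((n*x+α)^2+4*α*x) := by
          nlinarith [mul_pos hα (mul_pos hyx hpos)]
        calc (x * Sy)^2 = x^2 * Sy^2 := by ring
        _ = x^2 * ((n*y+α)^2+4*α*y) := by rw [hSy2]
        _ < y^2 * ((n*x+α)^2+4*α*x) := this
        _ = y^2 * Sx^2 := by rw [hSx2]
        _ = (y * Sx)^2 := by ring
      exact lt_of_pow_lt_pow_left₀ 2 (by positivity) hsq
    nlinarith [mul_lt_mul_of_pos_left hkey (show (0:ℝ) < 2*α by positivity),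
      mul_pos (mul_pos hα hα) (sub_pos.mpr hxy)]
  · have h2 : ∀ x : ℝ, 0 < x →
        -(α + n * x) / 2 + (1 / 2) * Real.sqrt ((n * x + α) ^ 2 + 4 * α * x)
          = 2 * α / (Real.sqrt ((n + α/x)^2 + 4*(α/x)) + (n + α/x)) := by
      intro x hx
      rw [key_ratl α n hα hn hx]
      have hx' : x ≠ 0 := ne_of_gt hx
      have h1 : Real.sqrt ((n + α/x)^2 + 4*(α/x))
          = Real.sqrt ((n * x + α) ^ 2 + 4 * α * x) / x := by
        rw [eq_div_iff hx', ← Real.sqrt_sq hx.le, ← Real.sqrt_mul (by positivity)]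
        congr 1
        field_simp
        ring
        rw [Real.sq_sqrt (sq_nonneg x)]
      rw [h1]
      have hsnn : 0 ≤ Real.sqrt ((n * x + α) ^ 2 + 4 * α * x) := Real.sqrt_nonneg _
      have hd : 0 < Real.sqrt ((n * x + α) ^ 2 + 4 * α * x) + (n * x + α) := by nlinarith
      field_simp
    have hg : Filter.Tendsto (fun x : ℝ => α / x) Filter.atTop (nhds 0) :=
      Filter.Tendsto.div_atTop tendsto_const_nhds Filter.tendsto_id
    have hsqrt : Filter.Tendsto
        (fun x : ℝ => Real.sqrt ((n + α/x)^2 + 4*(α/x)) + (n + α/x))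
        Filter.atTop (nhds (2*n)) := by
      have hin : Filter.Tendsto (fun x : ℝ => (n + α/x)^2 + 4*(α/x))
          Filter.atTop (nhds (n^2)) := by
        have := ((hg.const_add n).pow 2).add (hg.const_mul 4)
        simpa using this
      have hs : Filter.Tendsto (fun x : ℝ => Real.sqrt ((n + α/x)^2 + 4*(α/x)))
          Filter.atTop (nhds n) := by
        have := (Real.continuous_sqrt.tendsto (n^2)).comp hin
        simpa [Real.sqrt_sq hn.le, Function.comp_def] using this
      have := hs.add (hg.const_add n)
      simpa [two_mul] using this
    have hlim : Filter.Tendsto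
        (fun x : ℝ => 2 * α / (Real.sqrt ((n + α/x)^2 + 4*(α/x)) + (n + α/x)))
        Filter.atTop (nhds (α / n)) := by
      have := (tendsto_const_nhds (x := (2*α : ℝ)) (f := Filter.atTop)).div hsqrt
        (by positivity)
      convert this using 2
      · rfl
      · rw [mul_div_mul_left _ _ two_ne_zero]
    refine hlim.congr' ?_
    filter_upwards [Filter.eventually_gt_atTop 0] with x hx
    exact (h2 x hx).symm
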